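/- arXiv:math/0405215 — 4 statements merged into one kernel-verified Lean document; each statement's English description precedes it below -/
import Mathlib

section
/- Let Q(x) = x A xᵗ be a positive definite ternary quadratic form with det A = 1, let f = √Q, and let g = √(Q⁻¹) where Q⁻¹(x) = x A⁻¹ xᵗ. Then for every z ∈ ℝ³ with z ≠ 0, the Fourier-type integral I_f(z) = ∫_{f(u)≤1} e^{2πi z·u} du satisfies |I_f(z)| ≤ 1/(π g(z)²) + 1/(8π³ g(z)⁴). -/
open MeasureTheory Real Matrix

lemma trig_bound (t : ℝ) (ht : 0 < t) :
    |Real.sin t - t * Real.cos t| ≤ t + 1 / (2 * t) := by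
  have h1 : Real.sin t ^ 2 + Real.cos t ^ 2 = 1 := Real.sin_sq_add_cos_sq t
  have hB : 0 < t + 1 / (2 * t) := by positivity
  have h2 : (Real.sin t - t * Real.cos t) ^ 2 ≤ 1 + t ^ 2 := by
    nlinarith [sq_nonneg (Real.cos t + t * Real.sin t)]
  have h4 : (t + 1 / (2 * t)) ^ 2 = t ^ 2 + 1 + (1 / (2 * t)) ^ 2 := by
    field_simp; ring
  have h3 : (Real.sin t - t * Real.cos t) ^ 2 ≤ (t + 1 / (2 * t)) ^ 2 := by
    nlinarith [sq_nonneg (1 / (2 * t))]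
  exact abs_le_of_sq_le_sq h3 hB.le

lemma antider (a : ℂ) (ha0 : a ≠ 0) (s : ℝ) :
    HasDerivAt (fun s : ℝ => Complex.exp (a * s) *
      ((1 - (s:ℂ)^2) * a⁻¹ + 2 * s * a⁻¹^2 - 2 * a⁻¹^3))
      ((1 - (s:ℂ)^2) * Complex.exp (a * s)) s := by
  set b : ℂ := a⁻¹ with hb
  have hab : a * b = 1 := mul_inv_cancel₀ ha0
  have h1 : HasDerivAt (fun s : ℝ => (s : ℂ)) 1 s := Complex.ofRealCLM.hasDerivAt
  have h2 : HasDerivAt (fun s : ℝ => a * (s : ℂ)) a s := by simpa using h1.const_mul a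
  have h3 : HasDerivAt (fun s : ℝ => Complex.exp (a * s)) (Complex.exp (a * s) * a) s := h2.cexp
  have hsq : HasDerivAt (fun s : ℝ => (s:ℂ)^2) (2 * (s:ℂ)) s := by
    have := h1.fun_mul h1
    simpa [pow_two, two_mul] using this
  have h5 : HasDerivAt (fun s : ℝ => (1 - (s:ℂ)^2)) (-(2 * (s:ℂ))) s := by
    simpa using (hasDerivAt_const s (1:ℂ)).fun_sub hsq
  have h6 : HasDerivAt (fun s : ℝ => (1 - (s:ℂ)^2) * b) (-(2 * (s:ℂ)) * b) s := h5.mul_const b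
  have h7 : HasDerivAt (fun s : ℝ => 2 * (s:ℂ) * b^2) (2 * b^2) s := by
    have := (h1.const_mul (2:ℂ)).mul_const (b^2)
    simpa [mul_comm, mul_assoc] using this
  have h8 : HasDerivAt (fun s : ℝ => (1 - (s:ℂ)^2) * b + 2 * s * b^2 - 2 * b^3)
      (-(2 * (s:ℂ)) * b + 2 * b^2) s := by
    simpa using (h6.fun_add h7).fun_sub (hasDerivAt_const s ((2:ℂ) * b^3))
  have := h3.mul h8
  have key : Complex.exp (a * s) * a * ((1 - (s:ℂ)^2) * b + 2 * s * b^2 - 2 * b^3)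
      + Complex.exp (a * s) * (-(2 * (s:ℂ)) * b + 2 * b^2)
      = (1 - (s:ℂ)^2) * Complex.exp (a * s) := by
    linear_combination (Complex.exp (a * s) * ((1 - (s:ℂ)^2) + 2 * s * b - 2 * b^2)) * hab
  exact key ▸ this

lemma oneD_integral (r : ℝ) (hr : 0 < r) :
    (∫ s in (-1:ℝ)..1, (π * (1 - s ^ 2)) • Complex.exp (((2*π*r : ℝ) : ℂ) * Complex.I * s))
      = (((Real.sin (2*π*r) - (2*π*r) * Real.cos (2*π*r)) / (2*π^2*r^3) : ℝ) : ℂ) := by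
  set t : ℝ := 2*π*r with htdef
  have ht : 0 < t := by positivity
  set a : ℂ := (t:ℂ) * Complex.I with ha
  have ha0 : a ≠ 0 := mul_ne_zero (by exact_mod_cast ht.ne') Complex.I_ne_zero
  have hderiv : ∀ s : ℝ, HasDerivAt
      (fun s : ℝ => (π:ℂ) * (Complex.exp (a * s) *
        ((1 - (s:ℂ)^2) * a⁻¹ + 2 * s * a⁻¹^2 - 2 * a⁻¹^3)))
      ((π * (1 - s ^ 2)) • Complex.exp (a * s)) s := by
    intro s
    have := (antider a ha0 s).const_mul (π:ℂ)
    refine this.congr_deriv ?_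
    rw [Complex.real_smul]
    push_cast
    ring
  rw [intervalIntegral.integral_eq_sub_of_hasDerivAt (fun s _ => hderiv s)
    (by apply Continuous.intervalIntegrable; fun_prop)]
  have e1 : Complex.exp a = (Real.cos t : ℂ) + (Real.sin t : ℂ) * Complex.I := by
    rw [ha, Complex.exp_mul_I, ← Complex.ofReal_cos, ← Complex.ofReal_sin]
  have e2 : Complex.exp (-a) = (Real.cos t : ℂ) - (Real.sin t : ℂ) * Complex.I := by
    have h : -a = ((-t : ℝ) : ℂ) * Complex.I := by rw [ha]; push_cast; ring
    rw [h, Complex.exp_mul_I, ← Complex.ofReal_cos, ← Complex.ofReal_sin,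
      Real.cos_neg, Real.sin_neg]
    push_cast
    ring
  simp only [Complex.ofReal_one, Complex.ofReal_neg, mul_one, mul_neg_one]
  rw [e1, e2]
  have htc : (t:ℂ) ≠ 0 := by exact_mod_cast ht.ne'
  have hainv : a⁻¹ = -((t:ℂ))⁻¹ * Complex.I := by
    rw [ha, mul_inv, Complex.inv_I]; ring
  rw [hainv]
  have hπc : (π:ℂ) ≠ 0 := by exact_mod_cast pi_ne_zero
  have hrc : (r:ℂ) ≠ 0 := by exact_mod_cast hr.ne'
  rw [htdef]
  push_cast
  field_simp
  ring_nf
  rw [show Complex.I ^ 4 = 1 by rw [show (4:ℕ) = 2*2 from rfl, pow_mul, Complex.I_sq]; norm_num]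
  rw [Complex.I_sq]
  ring

lemma disc_volume (ρ : ℝ) (hρ : 0 ≤ ρ) :
    volume {y : Fin 2 → ℝ | y 0 ^ 2 + y 1 ^ 2 ≤ ρ ^ 2} = ENNReal.ofReal (π * ρ ^ 2) := by
  have hmp := EuclideanSpace.volume_preserving_symm_measurableEquiv_toLp (Fin 2)
  have key : ((MeasurableEquiv.toLp 2 (Fin 2 → ℝ)).symm) ⁻¹'
      {y : Fin 2 → ℝ | y 0 ^ 2 + y 1 ^ 2 ≤ ρ ^ 2} = Metric.closedBall 0 ρ := by
    ext x
    simp only [Set.mem_preimage, Set.mem_setOf_eq, Metric.mem_closedBall, dist_zero_right,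
      EuclideanSpace.norm_eq]
    rw [Real.sqrt_le_left (by positivity)]
    simp [Fin.sum_univ_two, Real.norm_eq_abs, sq_abs]
  calc volume {y : Fin 2 → ℝ | y 0 ^ 2 + y 1 ^ 2 ≤ ρ ^ 2}
      = volume (((MeasurableEquiv.toLp 2 (Fin 2 → ℝ)).symm) ⁻¹'
          {y : Fin 2 → ℝ | y 0 ^ 2 + y 1 ^ 2 ≤ ρ ^ 2}) := by
        rw [hmp.measure_preimage]
        exact (measurableSet_le (by fun_prop) measurable_const).nullMeasurableSet
    _ = volume (Metric.closedBall (0 : EuclideanSpace ℝ (Fin 2)) ρ) := by rw [key]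
    _ = ENNReal.ofReal (π * ρ ^ 2) := by
        rw [EuclideanSpace.volume_closedBall]
        have : Fintype.card (Fin 2) = 2 := by simp
        rw [this]
        rw [show ((2:ℕ):ℝ)/2 + 1 = 2 by norm_num, Real.Gamma_two]
        rw [show (Real.sqrt π)^2 = π from Real.sq_sqrt pi_nonneg]
        rw [← ENNReal.ofReal_pow hρ, ← ENNReal.ofReal_mul (by positivity)]
        ring_nf
lemma dot_helper (M P : Matrix (Fin 3) (Fin 3) ℝ) (x y : Fin 3 → ℝ) :
    M.mulVec x ⬝ᵥ P.mulVec y = x ⬝ᵥ (Mᵀ * P).mulVec y := by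
  rw [← Matrix.mulVec_mulVec, Matrix.dotProduct_mulVec x, Matrix.vecMul_transpose]

lemma ball_fourier (r : ℝ) (hr : 0 < r) :
    (∫ v in {v : Fin 3 → ℝ | v ⬝ᵥ v ≤ 1},
        Complex.exp (2*π*Complex.I*((r * v 0 : ℝ):ℂ)))
      = (((Real.sin (2*π*r) - (2*π*r) * Real.cos (2*π*r)) / (2*π^2*r^3) : ℝ) : ℂ) := by
  classical
  set e := MeasurableEquiv.piFinSuccAbove (fun _ : Fin 3 => ℝ) 0 with hedef
  set ψ := e.symm with hψdef
  have hψmp : MeasurePreserving (⇑ψ) volume volume :=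
    (volume_preserving_piFinSuccAbove (fun _ : Fin 3 => ℝ) 0).symm e
  rw [← hψmp.setIntegral_preimage_emb ψ.measurableEmbedding
    (fun v => Complex.exp (2*π*Complex.I*((r * v 0 : ℝ):ℂ))) _]
  have hψ0 : ∀ p : ℝ × (Fin 2 → ℝ), ψ p 0 = p.1 := by
    intro p
    simp [hψdef, hedef, MeasurableEquiv.piFinSuccAbove_symm_apply, Fin.insertNth_apply_same]
  set D : Set (ℝ × (Fin 2 → ℝ)) := {p | p.1^2 + (p.2 0^2 + p.2 1^2) ≤ 1} with hDdef
  have hpre : ⇑ψ ⁻¹' {v : Fin 3 → ℝ | v ⬝ᵥ v ≤ 1} = D := by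
    ext p
    simp only [Set.mem_preimage, Set.mem_setOf_eq, hDdef]
    have hdot : ψ p ⬝ᵥ ψ p = p.1^2 + (p.2 0^2 + p.2 1^2) := by
      simp only [hψdef, hedef, MeasurableEquiv.piFinSuccAbove_symm_apply]
      rw [dotProduct]
      rw [Fin.sum_univ_succ]
      simp [Fin.insertNth_apply_same, Fin.insertNth_apply_succAbove, Fin.sum_univ_two, pow_two]
    rw [hdot]
  rw [hpre]
  have heq : (fun p : ℝ × (Fin 2 → ℝ) => Complex.exp (2*π*Complex.I*((r * ψ p 0 : ℝ):ℂ)))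
      = fun p => Complex.exp (2*π*Complex.I*((r * p.1 : ℝ):ℂ)) := by
    funext p; rw [hψ0]
  simp only [heq]
  -- Fubini
  have hDm : MeasurableSet D := by
    refine (isClosed_le ?_ continuous_const).measurableSet
    fun_prop
  have hDsub : D ⊆ Metric.closedBall 0 2 := by
    intro p hp
    simp only [hDdef, Set.mem_setOf_eq] at hp
    have h1 : p.1^2 ≤ 1 := by nlinarith [sq_nonneg (p.2 0), sq_nonneg (p.2 1)]
    have h20 : (p.2 0)^2 ≤ 1 := by nlinarith [sq_nonneg (p.2 1), sq_nonneg p.1]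
    have h21 : (p.2 1)^2 ≤ 1 := by nlinarith [sq_nonneg (p.2 0), sq_nonneg p.1]
    have h2 : ∀ i : Fin 2, (p.2 i)^2 ≤ 1 := by
      intro i; fin_cases i
      · simpa using h20
      · simpa using h21
    rw [Metric.mem_closedBall, dist_zero_right, Prod.norm_def]
    have hb1 : ‖p.1‖ ≤ 1 := by
      rw [Real.norm_eq_abs]; exact abs_le_of_sq_le_sq (by simpa using h1) zero_le_one
    have hb2 : ‖p.2‖ ≤ 1 := by
      rw [pi_norm_le_iff_of_nonneg zero_le_one]
      intro i; rw [Real.norm_eq_abs]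
      exact abs_le_of_sq_le_sq (by simpa using h2 i) zero_le_one
    exact le_trans (max_le hb1 hb2) one_le_two
  have hDvol : volume D ≠ ⊤ :=
    ne_of_lt (lt_of_le_of_lt (measure_mono hDsub) measure_closedBall_lt_top)
  have hnorm1 : ∀ x : ℝ, ‖Complex.exp (2*π*Complex.I*((x : ℝ):ℂ))‖ = 1 := by
    intro x
    rw [show 2*π*Complex.I*((x : ℝ):ℂ) = ((2*π*x : ℝ):ℂ) * Complex.I by push_cast; ring]
    exact Complex.norm_exp_ofReal_mul_I _
  have hint : Integrable (D.indicator fun p : ℝ × (Fin 2 → ℝ) =>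
      Complex.exp (2*π*Complex.I*((r * p.1 : ℝ):ℂ))) (volume.prod volume) := by
    rw [← Measure.volume_eq_prod, integrable_indicator_iff hDm]
    refine Measure.integrableOn_of_bounded hDvol ?_ (M := 1) ?_
    · exact (Continuous.aestronglyMeasurable (by fun_prop))
    · filter_upwards with p
      rw [hnorm1]
  rw [← integral_indicator hDm, Measure.volume_eq_prod, integral_prod _ hint]
  -- inner integral
  have hinner : ∀ s : ℝ,
      (∫ y : Fin 2 → ℝ, D.indicator (fun p : ℝ × (Fin 2 → ℝ) =>
        Complex.exp (2*π*Complex.I*((r * p.1 : ℝ):ℂ))) (s, y))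
      = Set.indicator (Set.Icc (-1:ℝ) 1)
          (fun s => (π * (1 - s ^ 2)) • Complex.exp (((2*π*r : ℝ) : ℂ) * Complex.I * s)) s := by
    intro s
    have hslice : ∀ y : Fin 2 → ℝ,
        D.indicator (fun p : ℝ × (Fin 2 → ℝ) =>
          Complex.exp (2*π*Complex.I*((r * p.1 : ℝ):ℂ))) (s, y)
        = Set.indicator {y : Fin 2 → ℝ | y 0^2 + y 1^2 ≤ 1 - s^2}
            (fun _ => Complex.exp (2*π*Complex.I*((r * s : ℝ):ℂ))) y := by
      intro y
      simp only [Set.indicator_apply, hDdef, Set.mem_setOf_eq]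
      have : s^2 + (y 0^2 + y 1^2) ≤ 1 ↔ y 0^2 + y 1^2 ≤ 1 - s^2 := by
        constructor <;> intro <;> linarith
      simp [this]
    simp only [hslice]
    rw [integral_indicator_const]
    swap
    · exact (isClosed_le (by fun_prop) continuous_const).measurableSet
    by_cases hs : s ∈ Set.Icc (-1:ℝ) 1
    · rw [Set.indicator_of_mem hs]
      obtain ⟨hs1, hs2⟩ := hs
      have h1s : 0 ≤ 1 - s^2 := by nlinarith
      have hρ : Real.sqrt (1 - s^2) ^ 2 = 1 - s^2 := Real.sq_sqrt h1s
      have hvol : volume {y : Fin 2 → ℝ | y 0^2 + y 1^2 ≤ 1 - s^2}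
          = ENNReal.ofReal (π * (1 - s^2)) := by
        rw [← hρ, disc_volume _ (Real.sqrt_nonneg _), hρ]
      rw [measureReal_def, hvol, ENNReal.toReal_ofReal (by positivity)]
      congr 1
      push_cast
      ring
    · rw [Set.indicator_of_notMem hs]
      have hempty : {y : Fin 2 → ℝ | y 0^2 + y 1^2 ≤ 1 - s^2} = ∅ := by
        ext y
        simp only [Set.mem_setOf_eq, Set.mem_empty_iff_false, iff_false, not_le]
        simp only [Set.mem_Icc, not_and_or, not_le] at hs
        rcases hs with h | h <;> nlinarith [sq_nonneg (y 0), sq_nonneg (y 1)]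
      rw [hempty]
      simp
  simp only [hinner]
  rw [integral_indicator measurableSet_Icc, integral_Icc_eq_integral_Ioc,
    ← intervalIntegral.integral_of_le (by norm_num : (-1:ℝ) ≤ 1)]
  exact oneD_integral r hr

/-- bound on the Fourier transform of the indicator of a ternary
ellipsoid of volume-normalized positive definite form `Q` with `det A = 1`. -/
theorem stmt_2 (A : Matrix (Fin 3) (Fin 3) ℝ) (hA : A.IsSymm) (hApd : A.PosDef)
    (hdet : A.det = 1)
    (f g : (Fin 3 → ℝ) → ℝ)
    (hf : ∀ x, f x = Real.sqrt (x ⬝ᵥ A.mulVec x))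
    (hg : ∀ x, g x = Real.sqrt (x ⬝ᵥ A⁻¹.mulVec x))
    (z : Fin 3 → ℝ) (hz : z ≠ 0) :
    ‖(∫ u in {u : Fin 3 → ℝ | f u ≤ 1},
        Complex.exp (2 * π * Complex.I * (z ⬝ᵥ u : ℝ)))‖
      ≤ 1 / (π * g z ^ 2) + 1 / (8 * π ^ 3 * g z ^ 4) := by
  classical
  have hAinv : (A⁻¹).PosDef := hApd.inv
  have hq : 0 < z ⬝ᵥ A⁻¹.mulVec z := by simpa using hAinv.dotProduct_mulVec_pos hz
  set r : ℝ := g z with hrdef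
  have hr : 0 < r := by rw [hrdef, hg]; exact Real.sqrt_pos.mpr hq
  -- matrix square root
  set T : Matrix (Fin 3) (Fin 3) ℝ := (open scoped MatrixOrder in CFC.sqrt A) with hTdef
  have hTT : T * T = A := by
    open scoped MatrixOrder in exact CFC.sqrt_mul_sqrt_self A hApd.posSemidef.nonneg
  have hTsym : Tᵀ = T := by
    have h := (open scoped MatrixOrder in (CFC.sqrt_nonneg A).posSemidef).1
    simpa [Matrix.IsHermitian, Matrix.conjTranspose_eq_transpose_of_trivial, hTdef] using h
  have hTdet : T.det * T.det = 1 := by rw [← Matrix.det_mul, hTT, hdet]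
  have hTdet0 : T.det ≠ 0 := by
    intro h; rw [h, mul_zero] at hTdet; exact zero_ne_one hTdet
  set S : Matrix (Fin 3) (Fin 3) ℝ := T⁻¹ with hSdef
  have hSsym : Sᵀ = S := by rw [hSdef, Matrix.transpose_nonsing_inv, hTsym]
  have hSS : S * S = A⁻¹ := by rw [hSdef, ← Matrix.mul_inv_rev, hTT]
  have hSAS : S * A * S = 1 := by
    rw [hSdef, ← hTT, ← Matrix.mul_assoc,
      Matrix.nonsing_inv_mul T hTdet0.isUnit, Matrix.one_mul,
      Matrix.mul_nonsing_inv T hTdet0.isUnit]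
  set w : Fin 3 → ℝ := S.mulVec z with hwdef
  have hwr : w ⬝ᵥ w = r ^ 2 := by
    rw [hwdef, dot_helper, hSsym, hSS, hrdef, hg, Real.sq_sqrt hq.le]
  -- orthonormal basis extending w / r
  have hrne : r ≠ 0 := hr.ne'
  set u₀ : EuclideanSpace ℝ (Fin 3) := WithLp.toLp 2 (fun i => r⁻¹ * w i) with hu₀def
  have hsum : ∑ i, w i ^ 2 = r ^ 2 := by
    rw [← hwr]; simp [dotProduct, pow_two]
  have hu₀norm : ‖u₀‖ = 1 := by
    rw [EuclideanSpace.norm_eq]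
    have : ∀ i, ‖u₀ i‖ ^ 2 = r⁻¹ ^ 2 * w i ^ 2 := by
      intro i; rw [Real.norm_eq_abs, sq_abs, hu₀def]; ring
    rw [Finset.sum_congr rfl fun i _ => this i, ← Finset.mul_sum, hsum]
    rw [show r⁻¹ ^ 2 * r ^ 2 = 1 by field_simp]
    exact Real.sqrt_one
  have horth : Orthonormal ℝ (Set.restrict {(0 : Fin 3)} fun _ => u₀) := by
    constructor
    · intro i; exact hu₀norm
    · rintro ⟨i, hi⟩ ⟨j, hj⟩ hij
      simp only [Set.mem_singleton_iff] at hi hj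
      exact absurd (by simp [hi, hj] : (⟨i, hi⟩ : ({0} : Set (Fin 3))) = ⟨j, hj⟩) hij
  obtain ⟨b, hb⟩ := Orthonormal.exists_orthonormalBasis_extension_of_card_eq
    (𝕜 := ℝ) (by simp) horth
  have hb0 : b 0 = u₀ := hb 0 rfl
  have hbij : ∀ i j, (∑ k, b i k * b j k) = if i = j then 1 else 0 := by
    intro i j
    have h := orthonormal_iff_ite.mp b.orthonormal i j
    simpa [PiLp.inner_apply, RCLike.inner_apply, starRingEnd_apply, mul_comm] using h
  -- the orthogonal matrix O with columns b j
  set O : Matrix (Fin 3) (Fin 3) ℝ := Matrix.of (fun i j => b j i) with hOdef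
  have hOtO : Oᵀ * O = 1 := by
    ext i j
    rw [Matrix.mul_apply, Matrix.one_apply]
    simpa [hOdef, Matrix.transpose_apply] using hbij i j
  have hOdet : O.det * O.det = 1 := by
    have := congrArg Matrix.det hOtO
    rwa [Matrix.det_mul, Matrix.det_transpose, Matrix.det_one] at this
  -- w as r • b 0
  have hw0 : ∀ i, w i = r * b 0 i := by
    intro i
    rw [hb0]
    show w i = r * (r⁻¹ * w i)
    field_simp
  -- the combined matrix N
  set N : Matrix (Fin 3) (Fin 3) ℝ := S * O with hNdef
  have hNtAN : Nᵀ * (A * N) = 1 := by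
    have expand : Nᵀ * (A * N) = Oᵀ * ((S * A * S) * O) := by
      rw [hNdef, Matrix.transpose_mul, hSsym]
      noncomm_ring
    rw [expand, hSAS, Matrix.one_mul, hOtO]
  have hNdet : N.det * N.det = 1 := by
    have hsdet : S.det = T.det⁻¹ := by rw [hSdef, Matrix.det_nonsing_inv, Ring.inverse_eq_inv]
    rw [hNdef, Matrix.det_mul, hsdet]
    field_simp
    nlinarith [hOdet, hTdet]
  have hNdet0 : N.det ≠ 0 := by
    intro h; rw [h, mul_zero] at hNdet; exact zero_ne_one hNdet
  have hNabs : |N.det| = 1 := by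
    rcases mul_self_eq_one_iff.mp hNdet with h | h <;> simp [h]
  -- key identities
  have hquad : ∀ v : Fin 3 → ℝ, N.mulVec v ⬝ᵥ A.mulVec (N.mulVec v) = v ⬝ᵥ v := by
    intro v
    rw [Matrix.mulVec_mulVec, dot_helper, hNtAN, Matrix.one_mulVec]
  have hdotN : ∀ v : Fin 3 → ℝ, z ⬝ᵥ N.mulVec v = r * v 0 := by
    intro v
    have hOw : Oᵀ.mulVec w = fun j => r * if j = 0 then 1 else 0 := by
      funext j
      rw [Matrix.mulVec]
      show (fun k => Oᵀ j k) ⬝ᵥ w = _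
      have : ∀ k, Oᵀ j k * w k = r * (b j k * b 0 k) := by
        intro k; rw [Matrix.transpose_apply, hOdef, hw0]
        show b j k * (r * b 0 k) = _
        ring
      rw [dotProduct]
      rw [Finset.sum_congr rfl fun k _ => this k, ← Finset.mul_sum, hbij j 0]
    rw [Matrix.dotProduct_mulVec, ← Matrix.transpose_transpose N, Matrix.vecMul_transpose]
    have hNz : Nᵀ.mulVec z = Oᵀ.mulVec w := by
      rw [hNdef, Matrix.transpose_mul, hSsym, ← Matrix.mulVec_mulVec, hwdef]
    rw [hNz, hOw]
    simp [dotProduct]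
  -- the linear change of variables
  set ℓ : (Fin 3 → ℝ) →ₗ[ℝ] (Fin 3 → ℝ) := Matrix.toLin' N with hldef
  have hldet : LinearMap.det ℓ = N.det := LinearMap.det_toLin' N
  have hldet0 : LinearMap.det ℓ ≠ 0 := by rw [hldet]; exact hNdet0
  have hmp : MeasurePreserving (⇑ℓ) volume volume := by
    refine ⟨ℓ.continuous_of_finiteDimensional.measurable, ?_⟩
    rw [Measure.map_linearMap_addHaar_eq_smul_addHaar volume hldet0]
    rw [abs_inv, hldet, hNabs]
    simp
  have hemb : MeasurableEmbedding (⇑ℓ) :=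
    (LinearMap.equivOfDetNeZero ℓ hldet0).toContinuousLinearEquiv.toHomeomorph.measurableEmbedding
  -- change of variables in the integral
  have step1 : (∫ u in {u : Fin 3 → ℝ | u ⬝ᵥ A.mulVec u ≤ 1},
        Complex.exp (2*π*Complex.I*((z ⬝ᵥ u : ℝ):ℂ)))
      = ∫ v in {v : Fin 3 → ℝ | v ⬝ᵥ v ≤ 1},
        Complex.exp (2*π*Complex.I*((r * v 0 : ℝ):ℂ)) := by
    rw [← hmp.setIntegral_preimage_emb hemb
      (fun u => Complex.exp (2*π*Complex.I*((z ⬝ᵥ u : ℝ):ℂ)))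
      {u : Fin 3 → ℝ | u ⬝ᵥ A.mulVec u ≤ 1}]
    have hpre : ⇑ℓ ⁻¹' {u | u ⬝ᵥ A.mulVec u ≤ 1} = {v | v ⬝ᵥ v ≤ 1} := by
      ext v
      simp only [Set.mem_preimage, Set.mem_setOf_eq, hldef, Matrix.toLin'_apply]
      rw [hquad v]
    rw [hpre]
    have heq : (fun v => Complex.exp (2*π*Complex.I*((z ⬝ᵥ ℓ v : ℝ):ℂ)))
        = fun v => Complex.exp (2*π*Complex.I*((r * v 0 : ℝ):ℂ)) := by
      funext v
      rw [hldef]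
      simp only [Matrix.toLin'_apply]
      rw [hdotN v]
    simp only [heq]
  -- final assembly
  have hsetf : {u : Fin 3 → ℝ | f u ≤ 1} = {u : Fin 3 → ℝ | u ⬝ᵥ A.mulVec u ≤ 1} := by
    ext u
    simp [hf, Real.sqrt_le_one]
  rw [hsetf, step1, ball_fourier r hr, Complex.norm_real, Real.norm_eq_abs]
  set t : ℝ := 2*π*r with htdef
  have ht : 0 < t := by positivity
  calc |(Real.sin t - t * Real.cos t) / (2*π^2*r^3)|
      = |Real.sin t - t * Real.cos t| / (2*π^2*r^3) := by
        rw [abs_div, abs_of_pos (by positivity : (0:ℝ) < 2*π^2*r^3)]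
    _ ≤ (t + 1/(2*t)) / (2*π^2*r^3) := by
        apply div_le_div_of_nonneg_right ?_ (by positivity)
        exact trig_bound t ht
    _ = 1/(π*r^2) + 1/(8*π^3*r^4) := by
        rw [htdef]
        field_simp
        ring
end

section
/- Let f: [0,1) → ℝ be the function describing the boundary curve of a convex body of rotation: f > 0 and f'' < 0 on (0,1), f(0) ≤ 1, f(1) = 0, with all principal curvature radii of the boundary curve lying in [r_min, r_max]. Then for all 0 ≤ z < 1, |f''(z)| ≥ 1/r_max and |f''(z)| ≤ 8^{3/4}·(r_max³/r_min⁴)·(1−z)^{−3/2}. -/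
open Real Set

lemma phi_deriv (x : ℝ) :
    HasDerivAt (fun y : ℝ => y / Real.sqrt (1 + y ^ 2))
      (1 / Real.sqrt (1 + x ^ 2) ^ 3) x := by
  have hpos : (0:ℝ) < 1 + x ^ 2 := by positivity
  have h1 : HasDerivAt (fun y : ℝ => 1 + y ^ 2) (2 * x) x := by
    simpa using ((hasDerivAt_pow 2 x).const_add 1)
  have hs : HasDerivAt (fun y : ℝ => Real.sqrt (1 + y ^ 2))
      (1 / (2 * Real.sqrt (1 + x ^ 2)) * (2 * x)) x :=
    (Real.hasDerivAt_sqrt hpos.ne').comp x h1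
  have hsp : 0 < Real.sqrt (1 + x ^ 2) := Real.sqrt_pos.mpr hpos
  have hsq : Real.sqrt (1 + x ^ 2) ^ 2 = 1 + x ^ 2 := Real.sq_sqrt hpos.le
  have : HasDerivAt (fun y : ℝ => y / Real.sqrt (1 + y ^ 2)) _ x := (hasDerivAt_id' x).div hs hsp.ne'
  convert this using 1
  field_simp
  linear_combination (-1 : ℝ) * hsq

lemma phi_tendsto :
    Filter.Tendsto (fun x : ℝ => x / Real.sqrt (1 + x ^ 2)) Filter.atBot
      (nhds (-1)) := by
  have key : ∀ x : ℝ, x < 0 →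
      x / Real.sqrt (1 + x ^ 2) = -Real.sqrt (1 - 1 / (1 + x ^ 2)) := by
    intro x hx
    have hpos : (0:ℝ) < 1 + x ^ 2 := by positivity
    have h1 : (1 : ℝ) - 1 / (1 + x ^ 2) = x ^ 2 / (1 + x ^ 2) := by
      field_simp
      ring
    rw [h1, Real.sqrt_div (sq_nonneg x), Real.sqrt_sq_eq_abs, abs_of_neg hx]
    ring
  have hlim : Filter.Tendsto (fun x : ℝ => -Real.sqrt (1 - 1 / (1 + x ^ 2)))
      Filter.atBot (nhds (-1)) := by
    have h2 : Filter.Tendsto (fun x : ℝ => 1 + x ^ 2) Filter.atBot Filter.atTop := by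
      exact Filter.tendsto_atTop_mono (fun x => by nlinarith [sq_nonneg (x+1)])
        Filter.tendsto_neg_atBot_atTop
    have h3 : Filter.Tendsto (fun x : ℝ => 1 - 1 / (1 + x ^ 2)) Filter.atBot (nhds 1) := by
      have := Filter.Tendsto.div_atTop (tendsto_const_nhds (x := (1:ℝ))) h2
      simpa using (tendsto_const_nhds (x := (1:ℝ))).sub this
    have h4 : Filter.Tendsto (fun x : ℝ => Real.sqrt (1 - 1 / (1 + x ^ 2)))
        Filter.atBot (nhds 1) := by
      have := (Real.continuous_sqrt.tendsto 1).comp h3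
      simpa [Function.comp_def] using this
    simpa using h4.neg
  apply hlim.congr'
  filter_upwards [Filter.eventually_lt_atBot (0:ℝ)] with x hx
  exact (key x hx).symm

/-- effective curvature bounds for the profile function of a
convex body of rotation: `1/r_max ≤ |f''(z)| ≤ 8^{3/4}·(r_max³/r_min⁴)·(1−z)^{−3/2}`. -/
theorem stmt_10 (rmin rmax : ℝ) (hrmin : 0 < rmin) (hrmax : rmin ≤ rmax)
    (hrmin1 : rmin ≤ 1)
    (f f' f'' : ℝ → ℝ)
    (hder : ∀ z ∈ Set.Ico (0 : ℝ) 1, HasDerivAt f (f' z) z)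
    (hder2 : ∀ z ∈ Set.Ico (0 : ℝ) 1, HasDerivAt f' (f'' z) z)
    (hfpos : ∀ z ∈ Set.Ico (0 : ℝ) 1, 0 < f z)
    (hf0 : f 0 ≤ 1)
    (hf'0 : f' 0 = 0)
    (hconc : ∀ z ∈ Set.Ioo (0 : ℝ) 1, f'' z < 0)
    (hf1 : Filter.Tendsto f (nhdsWithin 1 (Set.Iio 1)) (nhds 0))
    (hf'1 : Filter.Tendsto f' (nhdsWithin 1 (Set.Iio 1)) Filter.atBot)
    (hcurv : ∀ z ∈ Set.Ico (0 : ℝ) 1,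
      rmin ≤ (1 + f' z ^ 2) ^ ((3 : ℝ) / 2) / |f'' z| ∧
      (1 + f' z ^ 2) ^ ((3 : ℝ) / 2) / |f'' z| ≤ rmax) :
    ∀ z ∈ Set.Ico (0 : ℝ) 1,
      1 / rmax ≤ |f'' z| ∧
      |f'' z| ≤ (8 : ℝ) ^ ((3 : ℝ) / 4) * (rmax ^ 3 / rmin ^ 4)
        * (1 - z) ^ (-(3 : ℝ) / 2) := by
  have hrmaxpos : 0 < rmax := lt_of_lt_of_le hrmin hrmax
  have hsq : ∀ w : ℝ, (0:ℝ) < 1 + f' w ^ 2 := fun w => by positivity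
  have hA1 : ∀ w : ℝ, (1:ℝ) ≤ (1 + f' w ^ 2) ^ ((3:ℝ)/2) := by
    intro w
    calc (1:ℝ) = 1 ^ ((3:ℝ)/2) := by simp
    _ ≤ (1 + f' w ^ 2) ^ ((3:ℝ)/2) :=
      Real.rpow_le_rpow zero_le_one (by nlinarith [sq_nonneg (f' w)]) (by norm_num)
  have hfne : ∀ w ∈ Ico (0:ℝ) 1, 0 < |f'' w| := by
    intro w hw
    rcases (hcurv w hw) with ⟨h1, h2⟩
    rcases eq_or_lt_of_le (abs_nonneg (f'' w)) with h | h
    · exfalso; rw [← h, div_zero] at h1; linarith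
    · exact h
  have habs_bounds : ∀ w ∈ Ico (0:ℝ) 1,
      (1 + f' w ^ 2) ^ ((3:ℝ)/2) / rmax ≤ |f'' w| ∧
      |f'' w| ≤ (1 + f' w ^ 2) ^ ((3:ℝ)/2) / rmin := by
    intro w hw
    obtain ⟨h1, h2⟩ := hcurv w hw
    have hw0 := hfne w hw
    have h2' := (div_le_iff₀ hw0).mp h2
    have h1' := (le_div_iff₀ hw0).mp h1
    constructor
    · rw [div_le_iff₀ hrmaxpos]; linarith
    · rw [le_div_iff₀ hrmin]; linarith
  have hcontf' : ContinuousOn f' (Ico 0 1) :=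
    fun w hw => ((hder2 w hw).continuousAt).continuousWithinAt
  have hf'nonpos : ∀ w ∈ Ico (0:ℝ) 1, f' w ≤ 0 := by
    intro w hw
    rcases eq_or_lt_of_le hw.1 with h | h
    · rw [← h]; exact le_of_eq hf'0
    · have hanti : StrictAntiOn f' (Icc 0 w) := by
        apply strictAntiOn_of_deriv_neg (convex_Icc 0 w)
        · exact hcontf'.mono (fun x hx => ⟨hx.1, lt_of_le_of_lt hx.2 hw.2⟩)
        · intro x hx
          rw [interior_Icc] at hx
          rw [(hder2 x ⟨hx.1.le, hx.2.trans hw.2⟩).deriv]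
          exact hconc x ⟨hx.1, hx.2.trans hw.2⟩
      have := hanti (left_mem_Icc.mpr h.le) (right_mem_Icc.mpr h.le) h
      rw [hf'0] at this; exact this.le
  set S : ℝ → ℝ := fun w => f' w / Real.sqrt (1 + f' w ^ 2) with hSdef
  have hSder : ∀ w ∈ Ico (0:ℝ) 1,
      HasDerivAt S (1 / Real.sqrt (1 + f' w ^ 2) ^ 3 * f'' w) w := by
    intro w hw
    exact (phi_deriv (f' w)).comp w (hder2 w hw)
  have hcube : ∀ w : ℝ, Real.sqrt (1 + f' w ^ 2) ^ 3 = (1 + f' w ^ 2) ^ ((3:ℝ)/2) := by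
    intro w
    rw [Real.sqrt_eq_rpow, ← Real.rpow_natCast ((1 + f' w ^ 2) ^ ((1:ℝ)/2)) 3,
      ← Real.rpow_mul (hsq w).le]
    norm_num
  have hkey : ∀ w ∈ Ico (0:ℝ) 1, (1 - w)/rmax ≤ 1 + S w := by
    intro w hw
    have hmono : ∀ v ∈ Ioo w 1, S v + v / rmax ≤ S w + w / rmax := by
      intro v hv
      have hsub : Icc w v ⊆ Ico 0 1 := fun x hx => ⟨hw.1.trans hx.1, lt_of_le_of_lt hx.2 hv.2⟩
      have hcont : ContinuousOn (fun t => S t + t / rmax) (Icc w v) := by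
        apply ContinuousOn.add
        · intro x hx; exact ((hSder x (hsub hx)).continuousAt).continuousWithinAt
        · exact (continuous_id.div_const rmax).continuousOn
      have hantit : AntitoneOn (fun t => S t + t / rmax) (Icc w v) := by
        apply antitoneOn_of_deriv_nonpos (convex_Icc w v) hcont
        · intro x hx
          rw [interior_Icc] at hx
          have hx' : x ∈ Ico (0:ℝ) 1 := ⟨(hw.1.trans hx.1.le), hx.2.trans hv.2⟩
          exact ((hSder x hx').add
            (((hasDerivAt_id' (x := x)) : HasDerivAt (fun y : ℝ => y) 1 x).div_const rmax)).differentiableAt.differentiableWithinAt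
        · intro x hx
          rw [interior_Icc] at hx
          have hx' : x ∈ Ico (0:ℝ) 1 := ⟨(hw.1.trans hx.1.le), hx.2.trans hv.2⟩
          have hds := (hSder x hx').add (((hasDerivAt_id' (x := x)) : HasDerivAt (fun y : ℝ => y) 1 x).div_const rmax)
          rw [show deriv (fun t => S t + t / rmax) x = _ from hds.deriv]
          have hcx : f'' x < 0 := hconc x ⟨lt_of_le_of_lt hw.1 hx.1, hx.2.trans hv.2⟩
          obtain ⟨hb1, hb2⟩ := hcurv x hx'
          have habs : |f'' x| = -f'' x := abs_of_neg hcx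
          have hApos : 0 < (1 + f' x ^ 2) ^ ((3:ℝ)/2) := Real.rpow_pos_of_pos (hsq x) _
          have h5 : (1 + f' x ^ 2) ^ ((3:ℝ)/2) ≤ rmax * (-f'' x) := by
            rw [habs] at hb2
            have hne : 0 < -f'' x := by linarith
            have := (div_le_iff₀ hne).mp hb2
            linarith
          rw [hcube x]
          have hfr : 1 / (1 + f' x ^ 2) ^ ((3:ℝ)/2) * f'' x ≤ -(1/rmax) := by
            rw [div_mul_eq_mul_div, one_mul, div_le_iff₀ hApos]
            have : -(1/rmax) * (1 + f' x ^ 2) ^ ((3:ℝ)/2) = -((1 + f' x ^ 2) ^ ((3:ℝ)/2) / rmax) := by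
              ring
            rw [this, le_neg]
            rw [div_le_iff₀ hrmaxpos]
            linarith
          linarith
      exact hantit (left_mem_Icc.mpr hv.1.le) (right_mem_Icc.mpr hv.1.le) hv.1.le
    have hlimS : Filter.Tendsto S (nhdsWithin 1 (Iio 1)) (nhds (-1)) := phi_tendsto.comp hf'1
    have hlim2 : Filter.Tendsto (fun v => S v + v / rmax) (nhdsWithin 1 (Iio 1))
        (nhds (-1 + 1/rmax)) := by
      apply hlimS.add
      have h : Filter.Tendsto (fun v : ℝ => v / rmax) (nhds 1) (nhds (1/rmax)) := by
        simpa using ((continuous_id.div_const rmax).tendsto 1)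
      exact h.mono_left nhdsWithin_le_nhds
    have hev : ∀ᶠ v in nhdsWithin 1 (Iio 1), S v + v / rmax ≤ S w + w / rmax := by
      filter_upwards [Ioo_mem_nhdsLT_of_mem ⟨hw.2, le_refl 1⟩] with v hv using hmono v hv
    have hfin : -1 + 1/rmax ≤ S w + w / rmax := le_of_tendsto hlim2 hev
    have hre : (1 - w)/rmax = 1/rmax - w/rmax := by ring
    linarith [hre.le]
  intro z hz
  obtain ⟨h1, h2⟩ := habs_bounds z hz
  constructor
  · calc 1/rmax ≤ (1 + f' z ^ 2) ^ ((3:ℝ)/2) / rmax := by gcongr; exact hA1 z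
    _ ≤ |f'' z| := h1
  · have hz1 : 0 < 1 - z := by linarith [hz.2]
    have hS0 : S z ≤ 0 := div_nonpos_iff.mpr (Or.inr ⟨hf'nonpos z hz, Real.sqrt_nonneg _⟩)
    have hk := hkey z hz
    have hprod : (1 - z)/rmax ≤ (1 + S z) * (1 - S z) := by
      have h0 : 0 ≤ 1 + S z := le_trans (by positivity) hk
      nlinarith
    have hSsq : (1 + S z) * (1 - S z) = 1 / (1 + f' z ^ 2) := by
      have hs2 : Real.sqrt (1 + f' z ^ 2) ^ 2 = 1 + f' z ^ 2 := Real.sq_sqrt (hsq z).le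
      have hsp : 0 < Real.sqrt (1 + f' z ^ 2) := Real.sqrt_pos.mpr (hsq z)
      rw [hSdef]
      field_simp
      linear_combination (f' z ^ 2) * hs2
    have hbound : 1 + f' z ^ 2 ≤ rmax / (1 - z) := by
      rw [hSsq] at hprod
      rw [div_le_div_iff₀ hrmaxpos (hsq z)] at hprod
      rw [le_div_iff₀ hz1]
      nlinarith
    have hApow : (1 + f' z ^ 2) ^ ((3:ℝ)/2) ≤ rmax ^ ((3:ℝ)/2) * (1-z) ^ (-(3:ℝ)/2) := by
      calc (1 + f' z ^ 2) ^ ((3:ℝ)/2) ≤ (rmax/(1-z)) ^ ((3:ℝ)/2) :=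
        Real.rpow_le_rpow (hsq z).le hbound (by norm_num)
      _ = rmax ^ ((3:ℝ)/2) * (1-z) ^ (-(3:ℝ)/2) := by
        rw [Real.div_rpow hrmaxpos.le hz1.le, div_eq_mul_inv,
          ← Real.rpow_neg hz1.le]
        norm_num
    have hzp : 0 < (1-z) ^ (-(3:ℝ)/2) := Real.rpow_pos_of_pos hz1 _
    have hfinal : |f'' z| ≤ rmax ^ ((3:ℝ)/2)/rmin * (1-z) ^ (-(3:ℝ)/2) := by
      calc |f'' z| ≤ (1 + f' z ^ 2) ^ ((3:ℝ)/2)/rmin := h2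
      _ ≤ (rmax ^ ((3:ℝ)/2) * (1-z) ^ (-(3:ℝ)/2))/rmin := by gcongr
      _ = rmax ^ ((3:ℝ)/2)/rmin * (1-z) ^ (-(3:ℝ)/2) := by ring
    refine hfinal.trans ?_
    have hcoef : rmax ^ ((3:ℝ)/2)/rmin ≤ (8:ℝ) ^ ((3:ℝ)/4) * (rmax ^ 3/rmin ^ 4) := by
      have e1 : rmin ^ 3 ≤ rmin ^ ((3:ℝ)/2) := by
        rw [← Real.rpow_natCast rmin 3]
        exact Real.rpow_le_rpow_of_exponent_ge hrmin hrmin1 (by norm_num)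
      have e2 : rmin ^ ((3:ℝ)/2) ≤ rmax ^ ((3:ℝ)/2) :=
        Real.rpow_le_rpow hrmin.le hrmax (by norm_num)
      have e3 : (1:ℝ) ≤ (8:ℝ) ^ ((3:ℝ)/4) := by
        calc (1:ℝ) = 1 ^ ((3:ℝ)/4) := by simp
        _ ≤ (8:ℝ) ^ ((3:ℝ)/4) := Real.rpow_le_rpow zero_le_one (by norm_num) (by norm_num)
      have e4 : rmax ^ 3 = rmax ^ ((3:ℝ)/2) * rmax ^ ((3:ℝ)/2) := by
        rw [← Real.rpow_add hrmaxpos, ← Real.rpow_natCast rmax 3]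
        norm_num
      have key : rmin ^ 3 ≤ (8:ℝ) ^ ((3:ℝ)/4) * rmax ^ ((3:ℝ)/2) := by
        nlinarith [Real.rpow_pos_of_pos hrmaxpos ((3:ℝ)/2)]
      rw [mul_div_assoc', div_le_div_iff₀ hrmin (by positivity)]
      have hmp : 0 < rmax ^ ((3:ℝ)/2) := Real.rpow_pos_of_pos hrmaxpos _
      calc rmax ^ ((3:ℝ)/2) * rmin ^ 4 = (rmax ^ ((3:ℝ)/2) * rmin) * rmin ^ 3 := by ring
      _ ≤ (rmax ^ ((3:ℝ)/2) * rmin) * ((8:ℝ) ^ ((3:ℝ)/4) * rmax ^ ((3:ℝ)/2)) := by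
        apply mul_le_mul_of_nonneg_left key (by positivity)
      _ = (8:ℝ) ^ ((3:ℝ)/4) * rmax ^ 3 * rmin := by rw [e4]; ring
    exact mul_le_mul_of_nonneg_right hcoef hzp.le
end

section
/- Under the hypotheses of the curvature lemma (1/r_max ≤ (1+f'(z)²)^{3/2}/|f''(z)| and |f''(z)| ≤ (1+f'(z)²)^{3/2}/r_min for 0 ≤ z < 1, with f'(z) → −∞ as z → 1⁻ and g the inverse of f with g(0)=1), if |f'(z)| ≥ 1 then |f''(z)| ≤ √8·(r_max³/r_min)·f(z)^{−3}. -/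
open Real Set

/-- Auxiliary: `(a^2)^(3/2) = |a|^3` for real `a`. -/
lemma sq_rpow_three_halves (a : ℝ) : (a ^ 2 : ℝ) ^ ((3 : ℝ) / 2) = |a| ^ 3 := by
  rw [← sq_abs a, ← Real.rpow_natCast (|a|) 2, ← Real.rpow_mul (abs_nonneg a),
    ← Real.rpow_natCast (|a|) 3]
  norm_num

/-- in the steep region `|f'(z)| ≥ 1` one has
`|f''(z)| ≤ √8·(r_max³/r_min)·f(z)^{−3}`. -/
theorem stmt_11 (rmin rmax : ℝ) (hrmin : 0 < rmin) (hrmax : rmin ≤ rmax)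
    (f f' f'' : ℝ → ℝ)
    (hder : ∀ z ∈ Set.Ico (0 : ℝ) 1, HasDerivAt f (f' z) z)
    (hder2 : ∀ z ∈ Set.Ico (0 : ℝ) 1, HasDerivAt f' (f'' z) z)
    (hfpos : ∀ z ∈ Set.Ico (0 : ℝ) 1, 0 < f z)
    (hf0 : f 0 ≤ 1)
    (hf'0 : f' 0 = 0)
    (hconc : ∀ z ∈ Set.Ioo (0 : ℝ) 1, f'' z < 0)
    (hf1 : Filter.Tendsto f (nhdsWithin 1 (Set.Iio 1)) (nhds 0))
    (hf'1 : Filter.Tendsto f' (nhdsWithin 1 (Set.Iio 1)) Filter.atBot)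
    (hcurv : ∀ z ∈ Set.Ico (0 : ℝ) 1,
      rmin ≤ (1 + f' z ^ 2) ^ ((3 : ℝ) / 2) / |f'' z| ∧
      (1 + f' z ^ 2) ^ ((3 : ℝ) / 2) / |f'' z| ≤ rmax) :
    ∀ z ∈ Set.Ico (0 : ℝ) 1, 1 ≤ |f' z| →
      |f'' z| ≤ Real.sqrt 8 * (rmax ^ 3 / rmin) * (f z) ^ (-(3 : ℝ)) := by
  have hrmax0 : 0 < rmax := lt_of_lt_of_le hrmin hrmax
  -- f' is strictly antitone on [0,1)
  have hcont' : ContinuousOn f' (Set.Ico 0 1) := fun x hx =>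
    (hder2 x hx).continuousAt.continuousWithinAt
  have hanti : StrictAntiOn f' (Set.Ico (0:ℝ) 1) := by
    apply strictAntiOn_of_deriv_neg (convex_Ico 0 1) hcont'
    intro x hx
    rw [interior_Ico] at hx
    rw [(hder2 x (Ioo_subset_Ico_self hx)).deriv]
    exact hconc x hx
  intro z hz hge
  have hz1 : z < 1 := hz.2
  have hz0 : 0 < z := by
    rcases eq_or_lt_of_le hz.1 with h | h
    · exfalso; rw [← h, hf'0] at hge; simp at hge; linarith
    · exact h
  have hfz'neg : f' z < 0 := by
    have := hanti (show (0:ℝ) ∈ Set.Ico (0:ℝ) 1 by constructor <;> norm_num) hz hz0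
    rwa [hf'0] at this
  have hfz' : f' z ≤ -1 := by
    rw [abs_of_neg hfz'neg] at hge; linarith
  -- on [z,1), f' w ≤ f' z
  have hle : ∀ w ∈ Set.Ico z 1, f' w ≤ f' z := by
    intro w hw
    rcases eq_or_lt_of_le hw.1 with h | h
    · rw [← h]
    · exact le_of_lt (hanti hz ⟨le_trans hz.1 hw.1, hw.2⟩ h)
  have hsub : Set.Ico z 1 ⊆ Set.Ico (0:ℝ) 1 := fun w hw => ⟨le_trans hz.1 hw.1, hw.2⟩
  have hne : ∀ w ∈ Set.Ico z 1, f' w ≠ 0 := fun w hw =>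
    ne_of_lt (lt_of_le_of_lt (hle w hw) hfz'neg)
  -- the auxiliary function h
  set h : ℝ → ℝ := fun w => f w + rmax * (f' w)⁻¹ with hh
  have hmono : MonotoneOn h (Set.Ico z 1) := by
    apply monotoneOn_of_deriv_nonneg (convex_Ico z 1)
    · apply ContinuousOn.add
      · exact fun w hw => (hder w (hsub hw)).continuousAt.continuousWithinAt
      · exact ContinuousOn.mul continuousOn_const
          (ContinuousOn.inv₀ (hcont'.mono hsub) hne)
    · intro w hw
      rw [interior_Ico] at hw
      have hw' : w ∈ Set.Ico z 1 := Ioo_subset_Ico_self hw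
      have : HasDerivAt h (f' w + rmax * (-f'' w / (f' w) ^ 2)) w :=
        (hder w (hsub hw')).add (((hder2 w (hsub hw')).inv (hne w hw')).const_mul rmax)
      exact this.differentiableAt.differentiableWithinAt
    · intro w hw
      rw [interior_Ico] at hw
      have hw' : w ∈ Set.Ico z 1 := Ioo_subset_Ico_self hw
      have hD : HasDerivAt h (f' w + rmax * (-f'' w / (f' w) ^ 2)) w :=
        (hder w (hsub hw')).add (((hder2 w (hsub hw')).inv (hne w hw')).const_mul rmax)
      rw [hD.deriv]
      -- need: rmax * (-f'' w) ≥ (-f' w) * (f' w)^2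
      have hw0 : w ∈ Set.Ioo (0:ℝ) 1 := ⟨lt_of_lt_of_le hz0 hw'.1, hw'.2⟩
      have hcc : f'' w < 0 := hconc w hw0
      have habs : |f'' w| = -f'' w := abs_of_neg hcc
      have hcb := (hcurv w (hsub hw')).2
      have hA : (f' w ^ 2 : ℝ) ^ ((3:ℝ)/2) ≤ (1 + f' w ^ 2) ^ ((3:ℝ)/2) := by
        apply Real.rpow_le_rpow (sq_nonneg _) (by linarith) (by norm_num)
      rw [sq_rpow_three_halves] at hA
      have hAbound : |f' w| ^ 3 ≤ rmax * (-f'' w) := by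
        have h1 : (1 + f' w ^ 2) ^ ((3:ℝ)/2) ≤ rmax * |f'' w| := by
          rw [div_le_iff₀ (by rw [habs]; linarith)] at hcb
          linarith [hcb]
        rw [habs] at h1; linarith
      have hfw : f' w < 0 := lt_of_le_of_lt (hle w hw') hfz'neg
      have habsfw : |f' w| = -f' w := abs_of_neg hfw
      rw [habsfw] at hAbound
      have hsq : (0:ℝ) < f' w ^ 2 := pow_two_pos_of_ne_zero (ne_of_lt hfw)
      have hkey2 : -f' w ≤ rmax * (-f'' w) / f' w ^ 2 := by
        rw [le_div_iff₀ hsq]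
        nlinarith [hAbound]
      have heq : rmax * (-f'' w / f' w ^ 2) = rmax * (-f'' w) / f' w ^ 2 := by ring
      linarith [heq ▸ hkey2]
  -- h tends to 0 at 1⁻
  have hlim : Filter.Tendsto h (nhdsWithin 1 (Set.Iio 1)) (nhds 0) := by
    have h2 : Filter.Tendsto (fun w => (f' w)⁻¹) (nhdsWithin 1 (Set.Iio 1)) (nhds 0) := by
      have hneg : Filter.Tendsto (fun w => -f' w) (nhdsWithin 1 (Set.Iio 1)) Filter.atTop :=
        Filter.tendsto_neg_atTop_iff.mpr hf'1
      have := hneg.inv_tendsto_atTop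
      have h3 : Filter.Tendsto (fun w => -(-f' w)⁻¹) (nhdsWithin 1 (Set.Iio 1)) (nhds (-0)) :=
        this.neg
      simp only [neg_zero, neg_inv, neg_neg] at h3
      exact h3
    have := hf1.add ((h2.const_mul rmax))
    simpa using this
  -- conclude h z ≤ 0
  have hz_le : h z ≤ 0 := by
    apply ge_of_tendsto hlim
    filter_upwards [Ioo_mem_nhdsLT_of_mem (show (1:ℝ) ∈ Set.Ioc z 1 from ⟨hz1, le_refl 1⟩)]
      with w hw
    exact hmono (left_mem_Ico.mpr hz1) (Ioo_subset_Ico_self hw) (le_of_lt hw.1)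
  -- hence |f' z| ≤ rmax / f z, i.e. f z * (-f' z) ≤ rmax
  have hfz : 0 < f z := hfpos z hz
  have hkey : f z * (-f' z) ≤ rmax := by
    have : f z + rmax * (f' z)⁻¹ ≤ 0 := hz_le
    have h4 : f z ≤ rmax * (-(f' z))⁻¹ := by
      rw [← neg_inv]; linarith
    have hp : 0 < -f' z := by linarith
    calc f z * (-f' z) ≤ (rmax * (-(f' z))⁻¹) * (-f' z) :=
          mul_le_mul_of_nonneg_right h4 (le_of_lt hp)
      _ = rmax := by field_simp [ne_of_lt hfz'neg]
  -- final estimate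
  have hcb := (hcurv z hz).1
  have hrpow : (f z) ^ (-(3:ℝ)) = (f z ^ 3)⁻¹ := by
    rw [Real.rpow_neg (le_of_lt hfz), ← Real.rpow_natCast (f z) 3]
    norm_num
  rw [hrpow]
  have h8 : Real.sqrt 8 = (2:ℝ) ^ ((3:ℝ)/2) := by
    rw [show (8:ℝ) = 2 ^ (3:ℕ) by norm_num, Real.sqrt_eq_rpow,
      ← Real.rpow_natCast (2:ℝ) 3, ← Real.rpow_mul (by norm_num)]
    norm_num
  -- |f'' z| ≤ (1+f'^2)^{3/2}/rmin
  by_cases hzero : f'' z = 0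
  · rw [hzero, abs_zero]
    positivity
  have habs : 0 < |f'' z| := abs_pos.mpr hzero
  have h1 : |f'' z| ≤ (1 + f' z ^ 2) ^ ((3:ℝ)/2) / rmin := by
    rw [le_div_iff₀ hrmin]
    have := (le_div_iff₀ habs).mp hcb
    linarith
  have h2 : (1 + f' z ^ 2 : ℝ) ^ ((3:ℝ)/2) ≤ (2 * f' z ^ 2) ^ ((3:ℝ)/2) := by
    apply Real.rpow_le_rpow (by positivity) ?_ (by norm_num)
    nlinarith [sq_abs (f' z), hge]
  have h3 : ((2:ℝ) * f' z ^ 2) ^ ((3:ℝ)/2) = Real.sqrt 8 * |f' z| ^ 3 := by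
    rw [Real.mul_rpow (by norm_num) (sq_nonneg _), sq_rpow_three_halves, h8]
  have h4 : |f' z| ≤ rmax / f z := by
    rw [le_div_iff₀ hfz, abs_of_neg hfz'neg]
    linarith [hkey]
  have h5 : |f' z| ^ 3 ≤ (rmax / f z) ^ 3 :=
    pow_le_pow_left₀ (abs_nonneg _) h4 3
  have h6 : (rmax / f z) ^ 3 = rmax ^ 3 / f z ^ 3 := by ring
  calc |f'' z| ≤ (1 + f' z ^ 2) ^ ((3:ℝ)/2) / rmin := h1
    _ ≤ (2 * f' z ^ 2) ^ ((3:ℝ)/2) / rmin := (div_le_div_iff_of_pos_right hrmin).mpr h2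
    _ = Real.sqrt 8 * |f' z| ^ 3 / rmin := by rw [h3]
    _ ≤ Real.sqrt 8 * (rmax ^ 3 / f z ^ 3) / rmin := by
        apply (div_le_div_iff_of_pos_right hrmin).mpr
        rw [← h6]
        exact mul_le_mul_of_nonneg_left h5 (Real.sqrt_nonneg 8)
    _ = Real.sqrt 8 * (rmax ^ 3 / rmin) * (f z ^ 3)⁻¹ := by
        field_simp
end

section
/- Let f: [−1,1] → ℝ be continuous, twice continuously differentiable on (−1,1), with f(±1) = 0, f even, f'' < 0 on (−1,1), and f(z)f'(z) → ∓r₀ as z → ±1. Set M = max_{−1≤z≤1} |f'(z)² + f(z)f''(z)| (which is finite since f'² + ff'' extends continuously). Then for every t > 0, |∫_{−t}^{t} f(u/t) f'(u/t) ψ(u) du| ≤ (r₀ + M)/4, where ψ(u) = u − ⌊u⌋ − 1/2. -/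
open Real Set intervalIntegral
open MeasureTheory Filter

section aux
variable {ψ : ℝ → ℝ} (hψ : ∀ w, ψ w = w - ⌊w⌋ - 1 / 2)

lemma my_intInt {g : ℝ → ℝ} {a b C : ℝ} (hab : a ≤ b)
    (hm : AEStronglyMeasurable g (volume.restrict (Ioo a b)))
    (hbd : ∀ x ∈ Ioo a b, ‖g x‖ ≤ C) : IntervalIntegrable g volume a b := by
  rw [intervalIntegrable_iff_integrableOn_Ioo_of_le hab]
  exact ⟨hm, HasFiniteIntegral.of_bounded ((ae_restrict_iff' measurableSet_Ioo).2
    (Filter.Eventually.of_forall hbd))⟩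

include hψ

lemma psi_meas : Measurable ψ := by
  have : ψ = fun w => w - (⌊w⌋ : ℝ) - 1 / 2 := funext hψ
  rw [this]
  exact (measurable_id.sub ((measurable_from_top).comp Int.measurable_floor)).sub measurable_const

lemma psi_bdd : ∀ u, ‖ψ u‖ ≤ 1 / 2 := by
  intro u
  have h1 := Int.floor_le u
  have h2 := Int.lt_floor_add_one u
  rw [hψ, Real.norm_eq_abs, abs_le]
  constructor <;> linarith

lemma psi_intInt : ∀ a b : ℝ, IntervalIntegrable ψ volume a b := by
  intro a b
  rcases le_total a b with hab | hab
  · exact my_intInt hab ((psi_meas hψ).aestronglyMeasurable.restrict) (fun x _ => psi_bdd hψ x)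
  · exact (my_intInt hab ((psi_meas hψ).aestronglyMeasurable.restrict)
      (fun x _ => psi_bdd hψ x)).symm

lemma psi_per : Function.Periodic ψ 1 := by
  intro x
  rw [hψ, hψ, Int.floor_add_one]
  push_cast
  ring

omit hψ in
lemma ae_ne (c : ℝ) : ∀ᵐ x : ℝ, x ≠ c := by
  rw [MeasureTheory.ae_iff]
  simpa using (measure_singleton c)

lemma psi1_eq (u : ℝ) :
    (∫ x in (0:ℝ)..u, ψ x) = (u - ⌊u⌋) ^ 2 / 2 - (u - ⌊u⌋) / 2 := by
  set n : ℤ := ⌊u⌋ with hn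
  have hnu : (n : ℝ) ≤ u := Int.floor_le u
  have hun : u < (n : ℝ) + 1 := Int.lt_floor_add_one u
  have hsplit : (∫ x in (0:ℝ)..(n:ℝ), ψ x) + (∫ x in (n:ℝ)..u, ψ x)
      = ∫ x in (0:ℝ)..u, ψ x :=
    intervalIntegral.integral_add_adjacent_intervals (psi_intInt hψ 0 n) (psi_intInt hψ n u)
  have h01 : (∫ x in (0:ℝ)..(1:ℝ), ψ x) = 0 := by
    have hcg : (∫ x in (0:ℝ)..(1:ℝ), ψ x) = ∫ x in (0:ℝ)..(1:ℝ), (x - 1/2) := by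
      apply intervalIntegral.integral_congr_ae
      filter_upwards [ae_ne 1] with x hx hxmem
      rw [Set.uIoc_of_le (by norm_num : (0:ℝ) ≤ 1)] at hxmem
      have hx1 : x < 1 := lt_of_le_of_ne hxmem.2 hx
      have : ⌊x⌋ = 0 := Int.floor_eq_zero_iff.2 ⟨le_of_lt hxmem.1, hx1⟩
      rw [hψ, this]
      norm_num
    rw [hcg, intervalIntegral.integral_sub intervalIntegrable_id intervalIntegrable_const,
      integral_id, intervalIntegral.integral_const]
    norm_num
  have h0n : (∫ x in (0:ℝ)..(n:ℝ), ψ x) = 0 := by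
    have := Function.Periodic.intervalIntegral_add_zsmul_eq (psi_per hψ) n 0 (psi_intInt hψ)
    simp only [zero_add, zsmul_eq_mul, mul_one] at this
    rw [this, h01, mul_zero]
  have hnu' : (∫ x in (n:ℝ)..u, ψ x) = ∫ x in (n:ℝ)..u, (x - ((n:ℝ) + 1/2)) := by
    apply intervalIntegral.integral_congr_ae
    filter_upwards with x hxmem
    rw [Set.uIoc_of_le hnu] at hxmem
    have : ⌊x⌋ = n := by
      rw [Int.floor_eq_iff]
      exact ⟨le_of_lt hxmem.1, by push_cast; exact lt_of_le_of_lt hxmem.2 hun⟩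
    rw [hψ, this]
    ring
  rw [← hsplit, h0n, zero_add, hnu',
    intervalIntegral.integral_sub intervalIntegrable_id intervalIntegrable_const,
    integral_id, intervalIntegral.integral_const]
  simp only [smul_eq_mul]
  ring

lemma psi1_bound (u : ℝ) : |∫ x in (0:ℝ)..u, ψ x| ≤ 1 / 8 := by
  rw [psi1_eq hψ]
  have h1 : (0:ℝ) ≤ u - ⌊u⌋ := by have := Int.floor_le u; linarith
  have h2 : u - ⌊u⌋ < 1 := by have := Int.lt_floor_add_one u; linarith
  rw [abs_le]
  constructor <;>
    nlinarith [sq_nonneg (u - (⌊u⌋:ℝ) - 1/2),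
      mul_nonneg h1 (by linarith : (0:ℝ) ≤ 1 - (u - ⌊u⌋))]

lemma psi1_cont : Continuous (fun u => ∫ x in (0:ℝ)..u, ψ x) :=
  intervalIntegral.continuous_primitive (psi_intInt hψ) 0

lemma psi_rcont (b : ℝ) : ContinuousWithinAt ψ (Ici b) b := by
  have hev : ∀ᶠ x in nhdsWithin b (Ici b), ψ x = x - (⌊b⌋ : ℝ) - 1 / 2 := by
    have hmem : Ici b ∩ Iio ((⌊b⌋ : ℝ) + 1) ∈ nhdsWithin b (Ici b) :=
      Filter.inter_mem self_mem_nhdsWithin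
        (mem_nhdsWithin_of_mem_nhds (Iio_mem_nhds (Int.lt_floor_add_one b)))
    filter_upwards [hmem] with x hx
    have hfl : ⌊x⌋ = ⌊b⌋ := by
      have h1 : ⌊b⌋ ≤ ⌊x⌋ := Int.floor_le_floor hx.1
      have h2 : ⌊x⌋ < ⌊b⌋ + 1 := by
        rw [Int.floor_lt]
        exact_mod_cast hx.2
      omega
    rw [hψ, hfl]
  have hc : ContinuousWithinAt (fun x : ℝ => x - (⌊b⌋ : ℝ) - 1 / 2) (Ici b) b :=
    ((continuous_id.sub continuous_const).sub continuous_const).continuousWithinAt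
  exact hc.congr_of_eventuallyEq hev (by rw [hψ])

lemma psi1_rderiv (b : ℝ) :
    HasDerivWithinAt (fun u => ∫ x in (0:ℝ)..u, ψ x) (ψ b) (Ioi b) b := by
  have h := intervalIntegral.integral_hasDerivWithinAt_right (a := 0) (psi_intInt hψ 0 b)
    (s := Ici b) (t := Ioi b)
    ((psi_meas hψ).stronglyMeasurable.stronglyMeasurableAtFilter)
    ((psi_rcont hψ b).mono Ioi_subset_Ici_self)
  exact h.mono Ioi_subset_Ici_self

end aux

/-- `|∫_{−t}^{t} f(u/t) f'(u/t) ψ(u) du| ≤ (r₀ + M)/4`. -/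
theorem stmt_15 (r₀ M : ℝ) (hr₀ : 0 < r₀)
    (f f' f'' : ℝ → ℝ) (ψ : ℝ → ℝ)
    (hψ : ∀ w, ψ w = w - ⌊w⌋ - 1 / 2)
    (hf : ContinuousOn f (Set.Icc (-1 : ℝ) 1))
    (hder : ∀ z ∈ Set.Ioo (-1 : ℝ) 1, HasDerivAt f (f' z) z)
    (hder2 : ∀ z ∈ Set.Ioo (-1 : ℝ) 1, HasDerivAt f' (f'' z) z)
    (hf''cont : ContinuousOn f'' (Set.Ioo (-1 : ℝ) 1))
    (hf1 : f 1 = 0) (hfm1 : f (-1) = 0)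
    (heven : ∀ z, f (-z) = f z)
    (hconc : ∀ z ∈ Set.Ioo (-1 : ℝ) 1, f'' z < 0)
    (hlim1 : Filter.Tendsto (fun z => f z * f' z)
      (nhdsWithin 1 (Set.Iio 1)) (nhds (-r₀)))
    (hlimm1 : Filter.Tendsto (fun z => f z * f' z)
      (nhdsWithin (-1) (Set.Ioi (-1))) (nhds r₀))
    (hM : ∀ z ∈ Set.Ioo (-1 : ℝ) 1, |f' z ^ 2 + f z * f'' z| ≤ M) :
    ∀ t : ℝ, 0 < t →
      |∫ u in (-t)..t, f (u / t) * f' (u / t) * ψ u| ≤ (r₀ + M) / 4 := by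
  intro t ht
  have htne : t ≠ 0 := ne_of_gt ht
  set hb : ℝ → ℝ := fun z => if -1 < z ∧ z < 1 then f z * f' z else if 1 ≤ z then -r₀ else r₀
    with hb_def
  have hb1 : hb 1 = -r₀ := by norm_num [hb_def]
  have hbm1 : hb (-1) = r₀ := by norm_num [hb_def]
  have hb_eq : ∀ z ∈ Ioo (-1:ℝ) 1, hb z = f z * f' z := by
    intro z hz
    simp [hb_def, hz.1, hz.2]
  have hIoo_open : IsOpen (Ioo (-1:ℝ) 1) := isOpen_Ioo
  have hb_cont : ContinuousOn hb (Icc (-1:ℝ) 1) := by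
    intro z hz
    rcases eq_or_lt_of_le hz.2 with h1 | h1
    · subst h1
      rw [ContinuousWithinAt, hb1]
      have hsub : Icc (-1:ℝ) 1 ⊆ insert 1 (Iio 1) := by
        intro x hx
        rcases eq_or_lt_of_le hx.2 with h | h
        · exact Or.inl h
        · exact Or.inr h
      apply Filter.Tendsto.mono_left _ (nhdsWithin_mono 1 hsub)
      rw [nhdsWithin_insert, Filter.tendsto_sup]
      constructor
      · rw [Filter.tendsto_pure_left]
        intro s hs
        exact Filter.eventually_pure.2 (mem_of_mem_nhds (by rwa [← hb1] at hs))
      · apply Filter.Tendsto.congr' _ hlim1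
        filter_upwards [mem_nhdsWithin_of_mem_nhds (Ioi_mem_nhds (by norm_num : (-1:ℝ) < 1)),
          self_mem_nhdsWithin] with x hx1 hx2
        exact (hb_eq x ⟨hx1, hx2⟩).symm
    rcases eq_or_lt_of_le hz.1 with hm | hm
    · rw [← hm]
      rw [ContinuousWithinAt, hbm1]
      have hsub : Icc (-1:ℝ) 1 ⊆ insert (-1) (Ioi (-1)) := by
        intro x hx
        rcases eq_or_lt_of_le hx.1 with h | h
        · exact Or.inl h.symm
        · exact Or.inr h
      apply Filter.Tendsto.mono_left _ (nhdsWithin_mono (-1) hsub)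
      rw [nhdsWithin_insert, Filter.tendsto_sup]
      constructor
      · rw [Filter.tendsto_pure_left]
        intro s hs
        exact Filter.eventually_pure.2 (mem_of_mem_nhds (by rwa [← hbm1] at hs))
      · apply Filter.Tendsto.congr' _ hlimm1
        filter_upwards [mem_nhdsWithin_of_mem_nhds (Iio_mem_nhds (by norm_num : (-1:ℝ) < 1)),
          self_mem_nhdsWithin] with x hx1 hx2
        exact (hb_eq x ⟨hx2, hx1⟩).symm
    · have hzo : z ∈ Ioo (-1:ℝ) 1 := ⟨hm, h1⟩
      have hca : ContinuousAt (fun z => f z * f' z) z :=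
        ((hder z hzo).continuousAt).mul ((hder2 z hzo).continuousAt)
      have hev : hb =ᶠ[nhds z] fun z => f z * f' z :=
        Filter.eventuallyEq_of_mem (hIoo_open.mem_nhds hzo) hb_eq
      exact (hca.congr hev.symm).continuousWithinAt
  set ψ₁ : ℝ → ℝ := fun u => ∫ x in (0:ℝ)..u, ψ x with hψ₁
  have hmem : ∀ u ∈ Ioo (-t) t, u / t ∈ Ioo (-1:ℝ) 1 := by
    intro u hu
    constructor
    · rw [lt_div_iff₀ ht]; linarith [hu.1]
    · rw [div_lt_one ht]; exact hu.2
  have hIccmaps : MapsTo (fun u : ℝ => u / t) (Icc (-t) t) (Icc (-1:ℝ) 1) := by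
    intro u hu
    constructor
    · rw [le_div_iff₀ ht]; linarith [hu.1]
    · rw [div_le_one ht]; exact hu.2
  set A : ℝ → ℝ := fun u => (f' (u/t) ^ 2 + f (u/t) * f'' (u/t)) / t * ψ₁ u with hA
  set K : ℝ → ℝ := fun u => hb (u/t) * ψ₁ u with hK
  have hdivc : Continuous (fun u : ℝ => u / t) := continuous_id.div_const t
  have hKd : ∀ u ∈ Ioo (-t) t, HasDerivWithinAt K (A u + hb (u/t) * ψ u) (Ioi u) u := by
    intro u hu
    have hz := hmem u hu
    have h1 : HasDerivAt (fun w : ℝ => f w * f' w)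
        (f' (u/t) ^ 2 + f (u/t) * f'' (u/t)) (u/t) := by
      have : HasDerivAt (fun w : ℝ => f w * f' w) _ (u/t) := (hder _ hz).mul (hder2 _ hz)
      convert this using 1
      ring
    have h2 : HasDerivAt (fun w : ℝ => w / t) (1 / t) u := by
      simpa using (hasDerivAt_id u).div_const t
    have h3 : HasDerivAt (fun w : ℝ => f (w/t) * f' (w/t))
        ((f' (u/t) ^ 2 + f (u/t) * f'' (u/t)) * (1/t)) u := (HasDerivAt.comp u h1 h2 :)
    have h4 : HasDerivAt (fun w : ℝ => hb (w/t))
        ((f' (u/t) ^ 2 + f (u/t) * f'' (u/t)) * (1/t)) u := by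
      apply h3.congr_of_eventuallyEq
      filter_upwards [(isOpen_Ioo : IsOpen (Ioo (-t) t)).mem_nhds hu] with x hx
      exact hb_eq _ (hmem x hx)
    have h5 : HasDerivWithinAt (fun w => hb (w/t) * ψ₁ w) _ (Ioi u) u :=
      (h4.hasDerivWithinAt).mul (psi1_rderiv hψ u)
    convert h5 using 1
    simp only [hA, hψ₁]
    ring
  have hKc : ContinuousOn K (Icc (-t) t) := by
    apply ContinuousOn.mul
    · exact hb_cont.comp hdivc.continuousOn hIccmaps
    · exact (psi1_cont hψ).continuousOn
  have hMnn : 0 ≤ M := le_trans (abs_nonneg _) (hM 0 ⟨by norm_num, by norm_num⟩)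
  have hf'c : ContinuousOn f' (Ioo (-1:ℝ) 1) := fun z hz =>
    (hder2 z hz).continuousAt.continuousWithinAt
  have hfc : ContinuousOn f (Ioo (-1:ℝ) 1) := fun z hz =>
    (hder z hz).continuousAt.continuousWithinAt
  have hdivmaps : MapsTo (fun u : ℝ => u / t) (Ioo (-t) t) (Ioo (-1:ℝ) 1) := hmem
  have hAbound : ∀ x ∈ Ioo (-t) t, ‖A x‖ ≤ M / t * (1/8) := by
    intro x hx
    have hz := hmem x hx
    have hbm := hM _ hz
    have hb2 := psi1_bound hψ x
    rw [hA]
    simp only [norm_eq_abs]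
    rw [abs_mul, abs_div, abs_of_pos ht]
    apply mul_le_mul _ hb2 (abs_nonneg _) (by positivity)
    gcongr
  have hAint : IntervalIntegrable A volume (-t) t := by
    apply my_intInt (by linarith) ?_ hAbound
    apply ContinuousOn.aestronglyMeasurable _ measurableSet_Ioo
    apply ContinuousOn.mul _ (psi1_cont hψ).continuousOn
    apply ContinuousOn.div_const
    exact ((hf'c.comp hdivc.continuousOn hdivmaps).pow 2).add
      ((hfc.comp hdivc.continuousOn hdivmaps).mul (hf''cont.comp hdivc.continuousOn hdivmaps))
  obtain ⟨C, hC⟩ := (isCompact_Icc : IsCompact (Icc (-1:ℝ) 1)).exists_bound_of_continuousOn hb_cont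
  have hCnn : 0 ≤ C := le_trans (norm_nonneg _) (hC 1 (by norm_num))
  have hBint : IntervalIntegrable (fun u => hb (u/t) * ψ u) volume (-t) t := by
    apply my_intInt (C := C * (1/2)) (by linarith)
    · exact (((hb_cont.comp hdivc.continuousOn hIccmaps).mono
        Ioo_subset_Icc_self).aestronglyMeasurable measurableSet_Ioo).mul
        ((psi_meas hψ).aestronglyMeasurable.restrict)
    · intro x hx
      rw [norm_mul]
      exact mul_le_mul (hC _ (hIccmaps (Ioo_subset_Icc_self hx))) (psi_bdd hψ x)
        (norm_nonneg _) hCnn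
  have hftc : (∫ u in (-t)..t, (A u + hb (u/t) * ψ u)) = K t - K (-t) :=
    intervalIntegral.integral_eq_sub_of_hasDeriv_right_of_le (by linarith) hKc hKd
      (hAint.add hBint)
  have hsplitint : (∫ u in (-t)..t, (A u + hb (u/t) * ψ u))
      = (∫ u in (-t)..t, A u) + ∫ u in (-t)..t, hb (u/t) * ψ u :=
    intervalIntegral.integral_add hAint hBint
  have horig : (∫ u in (-t)..t, f (u/t) * f' (u/t) * ψ u)
      = ∫ u in (-t)..t, hb (u/t) * ψ u := by
    apply intervalIntegral.integral_congr_ae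
    filter_upwards [ae_ne t] with x hx hxmem
    rw [Set.uIoc_of_le (by linarith : -t ≤ t)] at hxmem
    have hxoo : x ∈ Ioo (-t) t := ⟨hxmem.1, lt_of_le_of_ne hxmem.2 hx⟩
    rw [hb_eq _ (hmem x hxoo)]
  have hpsi1t := psi1_bound hψ t
  have hpsi1mt := psi1_bound hψ (-t)
  have hKt : |K t| ≤ r₀ / 8 := by
    have htt : t / t = 1 := div_self htne
    rw [hK]
    simp only [htt, hb1, abs_mul, abs_neg, abs_of_pos hr₀]
    calc r₀ * |ψ₁ t| ≤ r₀ * (1/8) := by gcongr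
      _ = r₀ / 8 := by ring
  have hKmt : |K (-t)| ≤ r₀ / 8 := by
    have htt : -t / t = -1 := by rw [neg_div, div_self htne]
    rw [hK]
    simp only [htt, hbm1, abs_mul, abs_of_pos hr₀]
    calc r₀ * |ψ₁ (-t)| ≤ r₀ * (1/8) := by gcongr
      _ = r₀ / 8 := by ring
  have hAbd : |∫ u in (-t)..t, A u| ≤ M / 4 := by
    have h := intervalIntegral.norm_integral_le_of_norm_le_const_ae
      (C := M / t * (1/8)) (a := -t) (b := t) (f := A) ?_
    · rw [norm_eq_abs] at h
      have he : M / t * (1/8) * |t - -t| = M / 4 := by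
        rw [show t - -t = 2 * t by ring, abs_of_pos (by linarith)]
        field_simp
        ring
      rwa [he] at h
    · filter_upwards [ae_ne t] with x hx hxmem
      rw [Set.uIoc_of_le (by linarith : -t ≤ t)] at hxmem
      exact hAbound x ⟨hxmem.1, lt_of_le_of_ne hxmem.2 hx⟩
  have hBeq : (∫ u in (-t)..t, hb (u/t) * ψ u)
      = (K t - K (-t)) - ∫ u in (-t)..t, A u := by
    rw [← hftc, hsplitint]; ring
  rw [horig, hBeq]
  have h1 : |K t - K (-t) - ∫ u in (-t)..t, A u|
      ≤ |K t| + |K (-t)| + |∫ u in (-t)..t, A u| :=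
    calc |K t - K (-t) - ∫ u in (-t)..t, A u|
        ≤ |K t - K (-t)| + |∫ u in (-t)..t, A u| := abs_sub _ _
      _ ≤ (|K t| + |K (-t)|) + |∫ u in (-t)..t, A u| := by gcongr; exact abs_sub _ _
  linarith
end
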